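/- arXiv:1612.01628 — 4 statements merged into one kernel-verified Lean document; each statement's English description precedes it below -/
import Mathlib

section
/- Let Ω ⊂ ℝ^d be open with both Ω and Ω^c of positive Lebesgue measure, 0 < s < 1 and p ≥ 1. The space W^{s,p}(Ω|Ω^c) of functions f ∈ L^p(ℝ^d) with finite norm ‖f‖^p = ‖f‖_{L^p(ℝ^d)}^p + ∫_Ω ∫_{Ω^c} |f(x)−f(y)|^p / |x−y|^{d+sp} dy dx is a Banach space. -/
open MeasureTheory
open scoped ENNReal

/-- The `p`-th power of the norm of the space `W^{s,p}(Ω|Ω^c)`: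
`‖f‖_{L^p(ℝ^d)}^p + ∫_Ω ∫_{Ω^c} |f(x)-f(y)|^p / |x-y|^{d+sp} dy dx`. -/
noncomputable def Wnorm {d : ℕ} (Ω : Set (EuclideanSpace ℝ (Fin d))) (s p : ℝ)
    (f : EuclideanSpace ℝ (Fin d) → ℝ) : ℝ≥0∞ :=
  (∫⁻ x, ENNReal.ofReal (|f x| ^ p)) +
    ∫⁻ x in Ω, ∫⁻ y in Ωᶜ,
      ENNReal.ofReal (|f x - f y| ^ p / dist x y ^ ((d : ℝ) + s * p))

section Aux

open Filter

variable {d : ℕ}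

private lemma contW {p : ℝ} (hp : 0 ≤ p) (D : ℝ) :
    Continuous fun t : ℝ => ENNReal.ofReal (|t| ^ p / D) :=
  ENNReal.continuous_ofReal.comp
    (((Real.continuous_rpow_const hp).comp continuous_abs).div_const D)

private lemma measW1 {p : ℝ} (hp : 0 ≤ p) {α : Type*} [MeasurableSpace α]
    {v : α → ℝ} (hv : Measurable v) :
    Measurable fun x => ENNReal.ofReal (|v x| ^ p) := by
  have : Continuous fun t : ℝ => ENNReal.ofReal (|t| ^ p) :=
    ENNReal.continuous_ofReal.comp ((Real.continuous_rpow_const hp).comp continuous_abs)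
  exact this.measurable.comp hv

private lemma measG {p q : ℝ} (hp : 0 ≤ p) (hq : 0 ≤ q)
    {v : EuclideanSpace ℝ (Fin d) → ℝ} (hv : Measurable v) :
    Measurable (fun z : (EuclideanSpace ℝ (Fin d)) × (EuclideanSpace ℝ (Fin d)) =>
      ENNReal.ofReal (|v z.1 - v z.2| ^ p / dist z.1 z.2 ^ q)) := by
  apply Measurable.ennreal_ofReal
  apply Measurable.div
  · exact ((Real.continuous_rpow_const hp).measurable).comp
      ((hv.comp measurable_fst).sub (hv.comp measurable_snd)).abs
  · exact ((Real.continuous_rpow_const hq).measurable).comp measurable_dist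

private lemma measG' {p q : ℝ} (hp : 0 ≤ p) (hq : 0 ≤ q)
    {v : EuclideanSpace ℝ (Fin d) → ℝ} (hv : Measurable v) (x : EuclideanSpace ℝ (Fin d)) :
    Measurable (fun y : EuclideanSpace ℝ (Fin d) =>
      ENNReal.ofReal (|v x - v y| ^ p / dist x y ^ q)) := by
  apply Measurable.ennreal_ofReal
  apply Measurable.div
  · exact ((Real.continuous_rpow_const hp).measurable).comp
      ((measurable_const.sub hv).abs)
  · exact ((Real.continuous_rpow_const hq).measurable).comp
      (measurable_const.dist measurable_id)

private lemma measI {p q : ℝ} (hp : 0 ≤ p) (hq : 0 ≤ q)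
    (Ω : Set (EuclideanSpace ℝ (Fin d)))
    {v : EuclideanSpace ℝ (Fin d) → ℝ} (hv : Measurable v) :
    Measurable (fun x => ∫⁻ y in Ωᶜ,
      ENNReal.ofReal (|v x - v y| ^ p / dist x y ^ q)) :=
  Measurable.lintegral_prod_right (measG hp hq hv)

private lemma liminf_add_le' (u v : ℕ → ℝ≥0∞) :
    liminf u atTop + liminf v atTop ≤ liminf (fun k => u k + v k) atTop := by
  rw [liminf_eq_iSup_iInf_of_nat, liminf_eq_iSup_iInf_of_nat, liminf_eq_iSup_iInf_of_nat]
  have hmono : ∀ w : ℕ → ℝ≥0∞, Monotone fun n => ⨅ i ≥ n, w i := fun w n m hnm =>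
    le_iInf₂ fun k hk => iInf₂_le k (le_trans hnm hk)
  rw [ENNReal.iSup_add_iSup_of_monotone (hmono u) (hmono v)]
  refine iSup_mono fun n => ?_
  exact le_iInf₂ fun k hk => add_le_add (iInf₂_le k hk) (iInf₂_le k hk)

/-- Pointwise power-mean inequality with a nonnegative-or-arbitrary denominator. -/
private lemma key_pt {p : ℝ} (hp : 1 ≤ p) (A1 A2 D : ℝ) :
    ENNReal.ofReal (|A1 + A2| ^ p / D) ≤
      (2 : ℝ≥0∞) ^ (p - 1) *
        (ENNReal.ofReal (|A1| ^ p / D) + ENNReal.ofReal (|A2| ^ p / D)) := by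
  have hp0 : (0:ℝ) ≤ p := le_trans zero_le_one hp
  rcases le_or_gt D 0 with hD | hD
  · have h0 : |A1 + A2| ^ p / D ≤ 0 :=
      div_nonpos_iff.2 (Or.inl ⟨Real.rpow_nonneg (abs_nonneg _) _, hD⟩)
    simp [ENNReal.ofReal_eq_zero.2 h0]
  · have base : ENNReal.ofReal (|A1 + A2| ^ p) ≤
        (2 : ℝ≥0∞) ^ (p - 1) *
          (ENNReal.ofReal (|A1| ^ p) + ENNReal.ofReal (|A2| ^ p)) := by
      rw [← ENNReal.ofReal_rpow_of_nonneg (abs_nonneg _) hp0,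
        ← ENNReal.ofReal_rpow_of_nonneg (abs_nonneg _) hp0,
        ← ENNReal.ofReal_rpow_of_nonneg (abs_nonneg _) hp0]
      calc ENNReal.ofReal |A1 + A2| ^ p
          ≤ (ENNReal.ofReal |A1| + ENNReal.ofReal |A2|) ^ p := by
            refine ENNReal.rpow_le_rpow ?_ hp0
            rw [← ENNReal.ofReal_add (abs_nonneg _) (abs_nonneg _)]
            exact ENNReal.ofReal_le_ofReal (abs_add_le _ _)
        _ ≤ _ := ENNReal.rpow_add_le_mul_rpow_add_rpow _ _ hp
    rw [ENNReal.ofReal_div_of_pos hD, ENNReal.ofReal_div_of_pos hD,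
      ENNReal.ofReal_div_of_pos hD, ENNReal.div_add_div_same, ← mul_div_assoc]
    exact ENNReal.div_le_div base le_rfl

/-- Quasi-triangle-type bound for `Wnorm`. -/
private lemma Wnorm_le (Ω : Set (EuclideanSpace ℝ (Fin d))) (s p : ℝ) (hs : 0 < s) (hp : 1 ≤ p)
    {a b : EuclideanSpace ℝ (Fin d) → ℝ} (ha : Measurable a) (hb : Measurable b) :
    Wnorm Ω s p a ≤ (2 : ℝ≥0∞) ^ (p - 1) * (Wnorm Ω s p (a - b) + Wnorm Ω s p b) := by
  have hp0 : (0:ℝ) ≤ p := le_trans zero_le_one hp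
  have hq0 : (0:ℝ) ≤ (d : ℝ) + s * p :=
    add_nonneg (Nat.cast_nonneg d) (mul_nonneg hs.le (le_trans zero_le_one hp))
  set c : ℝ≥0∞ := (2 : ℝ≥0∞) ^ (p - 1) with hc_def
  have hc : c ≠ ⊤ := ENNReal.rpow_ne_top_of_nonneg (by linarith) (by norm_num)
  set q : ℝ := (d : ℝ) + s * p with hq_def
  have h1 : (∫⁻ x, ENNReal.ofReal (|a x| ^ p)) ≤
      c * ((∫⁻ x, ENNReal.ofReal (|a x - b x| ^ p)) + ∫⁻ x, ENNReal.ofReal (|b x| ^ p)) := by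
    calc (∫⁻ x, ENNReal.ofReal (|a x| ^ p))
        ≤ ∫⁻ x, c * (ENNReal.ofReal (|a x - b x| ^ p) + ENNReal.ofReal (|b x| ^ p)) := by
          refine lintegral_mono fun x => ?_
          have := key_pt hp (a x - b x) (b x) 1
          simpa [div_one] using this
      _ = _ := by
          rw [lintegral_const_mul' _ _ hc, lintegral_add_left (f := fun x => ENNReal.ofReal (|a x - b x| ^ p)) (measW1 hp0 (ha.sub hb))]
  have h2 : (∫⁻ x in Ω, ∫⁻ y in Ωᶜ, ENNReal.ofReal (|a x - a y| ^ p / dist x y ^ q)) ≤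
      c * ((∫⁻ x in Ω, ∫⁻ y in Ωᶜ,
            ENNReal.ofReal (|(a x - b x) - (a y - b y)| ^ p / dist x y ^ q)) +
          ∫⁻ x in Ω, ∫⁻ y in Ωᶜ, ENNReal.ofReal (|b x - b y| ^ p / dist x y ^ q)) := by
    calc (∫⁻ x in Ω, ∫⁻ y in Ωᶜ, ENNReal.ofReal (|a x - a y| ^ p / dist x y ^ q))
        ≤ ∫⁻ x in Ω, c * ((∫⁻ y in Ωᶜ,
              ENNReal.ofReal (|(a x - b x) - (a y - b y)| ^ p / dist x y ^ q)) +
            ∫⁻ y in Ωᶜ, ENNReal.ofReal (|b x - b y| ^ p / dist x y ^ q)) := by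
          refine lintegral_mono fun x => ?_
          calc (∫⁻ y in Ωᶜ, ENNReal.ofReal (|a x - a y| ^ p / dist x y ^ q))
              ≤ ∫⁻ y in Ωᶜ, c *
                  (ENNReal.ofReal (|(a x - b x) - (a y - b y)| ^ p / dist x y ^ q) +
                    ENNReal.ofReal (|b x - b y| ^ p / dist x y ^ q)) := by
                refine lintegral_mono fun y => ?_
                have := key_pt hp ((a x - b x) - (a y - b y)) (b x - b y) (dist x y ^ q)
                have heq : ((a x - b x) - (a y - b y)) + (b x - b y) = a x - a y := by ring
                rwa [heq] at this
            _ = _ := by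
                rw [lintegral_const_mul' _ _ hc,
                  lintegral_add_left (f := fun y => ENNReal.ofReal (|a x - b x - (a y - b y)| ^ p / dist x y ^ q)) (measG' hp0 hq0 (ha.sub hb) x)]
      _ = _ := by
          rw [lintegral_const_mul' _ _ hc,
            lintegral_add_left (f := fun x => ∫⁻ y in Ωᶜ, ENNReal.ofReal (|a x - b x - (a y - b y)| ^ p / dist x y ^ q)) (measI hp0 hq0 Ω (ha.sub hb))]
  have expand : Wnorm Ω s p (a - b) =
      (∫⁻ x, ENNReal.ofReal (|a x - b x| ^ p)) +
        ∫⁻ x in Ω, ∫⁻ y in Ωᶜ,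
          ENNReal.ofReal (|(a x - b x) - (a y - b y)| ^ p / dist x y ^ q) := by
    simp [Wnorm, Pi.sub_apply, hq_def]
  rw [show Wnorm Ω s p a = (∫⁻ x, ENNReal.ofReal (|a x| ^ p)) +
      ∫⁻ x in Ω, ∫⁻ y in Ωᶜ, ENNReal.ofReal (|a x - a y| ^ p / dist x y ^ q) from rfl,
    expand, show Wnorm Ω s p b = (∫⁻ x, ENNReal.ofReal (|b x| ^ p)) +
      ∫⁻ x in Ω, ∫⁻ y in Ωᶜ, ENNReal.ofReal (|b x - b y| ^ p / dist x y ^ q) from rfl]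
  calc _ ≤ (c * ((∫⁻ x, ENNReal.ofReal (|a x - b x| ^ p)) + ∫⁻ x, ENNReal.ofReal (|b x| ^ p))) +
        c * ((∫⁻ x in Ω, ∫⁻ y in Ωᶜ,
            ENNReal.ofReal (|(a x - b x) - (a y - b y)| ^ p / dist x y ^ q)) +
          ∫⁻ x in Ω, ∫⁻ y in Ωᶜ, ENNReal.ofReal (|b x - b y| ^ p / dist x y ^ q)) :=
        add_le_add h1 h2
    _ = _ := by ring

/-- Fatou-type lemma for `Wnorm` along an a.e. convergent sequence. -/
private lemma Wnorm_le_liminf (Ω : Set (EuclideanSpace ℝ (Fin d))) (s p : ℝ)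
    (hs : 0 < s) (hp : 1 ≤ p)
    {u : ℕ → EuclideanSpace ℝ (Fin d) → ℝ} {v : EuclideanSpace ℝ (Fin d) → ℝ}
    (hu : ∀ k, Measurable (u k))
    (hv : ∀ᵐ x, Tendsto (fun k => u k x) atTop (nhds (v x))) :
    Wnorm Ω s p v ≤ liminf (fun k => Wnorm Ω s p (u k)) atTop := by
  have hp0 : (0:ℝ) ≤ p := le_trans zero_le_one hp
  have hq0 : (0:ℝ) ≤ (d : ℝ) + s * p :=
    add_nonneg (Nat.cast_nonneg d) (mul_nonneg hs.le (le_trans zero_le_one hp))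
  set q : ℝ := (d : ℝ) + s * p with hq_def
  have h1 : (∫⁻ x, ENNReal.ofReal (|v x| ^ p)) ≤
      liminf (fun k => ∫⁻ x, ENNReal.ofReal (|u k x| ^ p)) atTop := by
    refine le_trans (le_of_eq (lintegral_congr_ae ?_))
      (lintegral_liminf_le fun k => measW1 hp0 (hu k))
    filter_upwards [hv] with x hx
    have ht : Tendsto (fun k => ENNReal.ofReal (|u k x| ^ p)) atTop
        (nhds (ENNReal.ofReal (|v x| ^ p))) := by
      have := (contW hp0 1).tendsto (v x)
      simpa [div_one, Function.comp_def] using (this.comp hx)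
    exact ht.liminf_eq.symm
  have h2 : (∫⁻ x in Ω, ∫⁻ y in Ωᶜ, ENNReal.ofReal (|v x - v y| ^ p / dist x y ^ q)) ≤
      liminf (fun k => ∫⁻ x in Ω, ∫⁻ y in Ωᶜ,
        ENNReal.ofReal (|u k x - u k y| ^ p / dist x y ^ q)) atTop := by
    have step1 : ∀ᵐ x ∂(volume.restrict Ω),
        (∫⁻ y in Ωᶜ, ENNReal.ofReal (|v x - v y| ^ p / dist x y ^ q)) ≤
          liminf (fun k => ∫⁻ y in Ωᶜ,
            ENNReal.ofReal (|u k x - u k y| ^ p / dist x y ^ q)) atTop := by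
      filter_upwards [ae_restrict_of_ae hv] with x hx
      refine le_trans (le_of_eq (lintegral_congr_ae ?_))
        (lintegral_liminf_le fun k => measG' hp0 hq0 (hu k) x)
      filter_upwards [ae_restrict_of_ae hv] with y hy
      have hsub : Tendsto (fun k => u k x - u k y) atTop (nhds (v x - v y)) := hx.sub hy
      have ht : Tendsto (fun k => ENNReal.ofReal (|u k x - u k y| ^ p / dist x y ^ q)) atTop
          (nhds (ENNReal.ofReal (|v x - v y| ^ p / dist x y ^ q))) :=
        ((contW hp0 (dist x y ^ q)).tendsto (v x - v y)).comp hsub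
      exact ht.liminf_eq.symm
    refine le_trans (lintegral_mono_ae step1) ?_
    exact lintegral_liminf_le fun k => measI hp0 hq0 Ω (hu k)
  exact le_trans (add_le_add h1 h2) (liminf_add_le' _ _)

end Aux

open Filter in
/-- Completeness of `W^{s,p}(Ω|Ω^c)`: every Cauchy sequence converges in the space. -/
theorem stmt2 {d : ℕ} (Ω : Set (EuclideanSpace ℝ (Fin d))) (hΩ : IsOpen Ω)
    (h1 : 0 < volume Ω) (h2 : 0 < volume Ωᶜ)
    (s p : ℝ) (hs : 0 < s) (hs1 : s < 1) (hp : 1 ≤ p)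
    (f : ℕ → EuclideanSpace ℝ (Fin d) → ℝ) (hmeas : ∀ n, Measurable (f n))
    (hfin : ∀ n, Wnorm Ω s p (f n) < ⊤)
    (hCauchy : ∀ ε : ℝ, 0 < ε → ∃ N, ∀ m ≥ N, ∀ n ≥ N,
      Wnorm Ω s p (f m - f n) < ENNReal.ofReal ε) :
    ∃ g : EuclideanSpace ℝ (Fin d) → ℝ, Measurable g ∧ Wnorm Ω s p g < ⊤ ∧
      Filter.Tendsto (fun n => Wnorm Ω s p (f n - g)) Filter.atTop (nhds 0) := by
  have hp0 : (0:ℝ) < p := lt_of_lt_of_le one_pos hp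
  set p' : ℝ≥0∞ := ENNReal.ofReal p with hp'_def
  have hp'0 : p' ≠ 0 := (ENNReal.ofReal_pos.2 hp0).ne'
  have hp'top : p' ≠ ⊤ := ENNReal.ofReal_ne_top
  have hp'1 : 1 ≤ p' := ENNReal.one_le_ofReal.2 hp
  -- translation of the first part of Wnorm into eLpNorm
  have lint_eq : ∀ h : EuclideanSpace ℝ (Fin d) → ℝ,
      (∫⁻ x, ENNReal.ofReal (|h x| ^ p)) = eLpNorm h p' volume ^ p := by
    intro h
    rw [eLpNorm_eq_lintegral_rpow_enorm_toReal hp'0 hp'top, ENNReal.toReal_ofReal hp0.le,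
      ← ENNReal.rpow_mul, one_div, inv_mul_cancel₀ hp0.ne', ENNReal.rpow_one]
    refine lintegral_congr fun x => ?_
    rw [← ofReal_norm, Real.norm_eq_abs,
      ENNReal.ofReal_rpow_of_nonneg (abs_nonneg _) hp0.le]
  have first_le : ∀ h : EuclideanSpace ℝ (Fin d) → ℝ,
      eLpNorm h p' volume ^ p ≤ Wnorm Ω s p h := by
    intro h; rw [← lint_eq h]; exact le_self_add
  -- choose a rapidly Cauchy subsequence
  have hεpos : ∀ N : ℕ, (0:ℝ) < ((2:ℝ)⁻¹ ^ (N + 1)) ^ p :=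
    fun N => Real.rpow_pos_of_pos (pow_pos (by norm_num) _) _
  choose A hA using fun N => hCauchy (((2:ℝ)⁻¹ ^ (N + 1)) ^ p) (hεpos N)
  let φ : ℕ → ℕ := fun N => Nat.rec (A 0) (fun N ih => max (A (N + 1)) (ih + 1)) N
  have hφA : ∀ N, A N ≤ φ N := by
    intro N; cases N with
    | zero => exact le_rfl
    | succ N => exact le_max_left _ _
  have hφmono : StrictMono φ := strictMono_nat_of_lt_succ fun N =>
    lt_of_lt_of_le (Nat.lt_succ_self _) (le_max_right _ _)
  have hB : ∀ N n m : ℕ, N ≤ n → N ≤ m →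
      eLpNorm (f (φ n) - f (φ m)) p' volume < ENNReal.ofReal ((2:ℝ)⁻¹ ^ (N + 1)) := by
    intro N n m hn hm
    have h := hA N (φ n) (le_trans (hφA N) (hφmono.monotone hn)) (φ m)
      (le_trans (hφA N) (hφmono.monotone hm))
    have h' : eLpNorm (f (φ n) - f (φ m)) p' volume ^ p <
        ENNReal.ofReal (((2:ℝ)⁻¹ ^ (N + 1)) ^ p) :=
      lt_of_le_of_lt (first_le _) h
    rw [← ENNReal.ofReal_rpow_of_nonneg (by positivity) hp0.le] at h'
    exact (ENNReal.rpow_lt_rpow_iff hp0).1 h'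
  have hBsum : (∑' i : ℕ, ENNReal.ofReal ((2:ℝ)⁻¹ ^ (i + 1))) ≠ ⊤ := by
    have heq : ∀ i : ℕ, ENNReal.ofReal ((2:ℝ)⁻¹ ^ (i + 1)) =
        (ENNReal.ofReal (2:ℝ)⁻¹) ^ (i + 1) := fun i => ENNReal.ofReal_pow (by norm_num) _
    simp_rw [heq, ENNReal.tsum_geometric_add_one]
    refine ENNReal.mul_ne_top ENNReal.ofReal_ne_top (ENNReal.inv_ne_top.2 ?_)
    rw [Ne, tsub_eq_zero_iff_le, not_le]
    exact ENNReal.ofReal_lt_one.2 (by norm_num)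
  have hMem : ∀ n, MemLp (f (φ n)) p' volume := by
    intro n
    refine ⟨(hmeas _).aestronglyMeasurable, ?_⟩
    have : eLpNorm (f (φ n)) p' volume ^ p < ⊤ :=
      lt_of_le_of_lt (first_le _) (hfin _)
    exact (ENNReal.rpow_lt_top_iff_of_pos hp0).1 this
  obtain ⟨flim, hflim, htend⟩ := MeasureTheory.Lp.cauchy_complete_eLpNorm hp'1 hMem hBsum hB
  set g : EuclideanSpace ℝ (Fin d) → ℝ := hflim.1.mk flim with hg_def
  have hgmeas : Measurable g := hflim.1.stronglyMeasurable_mk.measurable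
  have hgae : flim =ᵐ[volume] g := hflim.1.ae_eq_mk
  have htim : TendstoInMeasure volume (fun n => f (φ n)) atTop flim :=
    tendstoInMeasure_of_tendsto_eLpNorm hp'0
      (fun n => (hmeas _).aestronglyMeasurable) hflim.1 htend
  obtain ⟨ψ, hψmono, hψae⟩ := htim.exists_seq_tendsto_ae
  have hae : ∀ᵐ x, Tendsto (fun k => f (φ (ψ k)) x) atTop (nhds (g x)) := by
    filter_upwards [hψae, hgae] with x hx heq
    rwa [heq] at hx
  have hidx : ∀ k, k ≤ φ (ψ k) := fun k =>
    le_trans hψmono.le_apply hφmono.le_apply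
  refine ⟨g, hgmeas, ?_, ?_⟩
  · -- Wnorm g < ⊤
    have hfatou := Wnorm_le_liminf Ω s p hs hp (fun k => hmeas (φ (ψ k))) hae
    obtain ⟨N1, hN1⟩ := hCauchy 1 one_pos
    set C : ℝ≥0∞ := (2 : ℝ≥0∞) ^ (p - 1) * (ENNReal.ofReal 1 + Wnorm Ω s p (f N1)) with hC_def
    have hbd : ∀ᶠ k in atTop, Wnorm Ω s p (f (φ (ψ k))) ≤ C := by
      filter_upwards [eventually_ge_atTop N1] with k hk
      refine le_trans (Wnorm_le Ω s p hs hp (hmeas _) (hmeas N1)) ?_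
      refine mul_le_mul_right (add_le_add_left ?_ _) _
      exact (hN1 (φ (ψ k)) (le_trans hk (hidx k)) N1 le_rfl).le
    have hliminf : liminf (fun k => Wnorm Ω s p (f (φ (ψ k)))) atTop ≤ C := by
      refine le_trans (liminf_le_liminf hbd) ?_
      simp
    refine lt_of_le_of_lt (le_trans hfatou hliminf) ?_
    refine ENNReal.mul_lt_top ?_ ?_
    · exact (ENNReal.rpow_ne_top_of_nonneg (by linarith) (by norm_num)).lt_top
    · exact ENNReal.add_lt_top.2 ⟨ENNReal.ofReal_lt_top, hfin N1⟩
  · -- Tendsto to 0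
    rw [ENNReal.tendsto_atTop_zero]
    intro ε hε
    set δ : ℝ≥0∞ := min ε 1 with hδ_def
    have hδ0 : δ ≠ 0 := (lt_min hε zero_lt_one).ne'
    have hδtop : δ ≠ ⊤ := ne_top_of_le_ne_top ENNReal.one_ne_top (min_le_right _ _)
    have hδr : 0 < δ.toReal := ENNReal.toReal_pos hδ0 hδtop
    obtain ⟨N, hN⟩ := hCauchy δ.toReal hδr
    refine ⟨N, fun n hn => ?_⟩
    have hconv : ∀ᵐ x, Tendsto (fun k => (f n - f (φ (ψ k))) x) atTop (nhds ((f n - g) x)) := by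
      filter_upwards [hae] with x hx
      simpa [Pi.sub_apply] using (tendsto_const_nhds.sub hx)
    have hfat := Wnorm_le_liminf Ω s p hs hp
      (u := fun k => f n - f (φ (ψ k))) (v := f n - g)
      (fun k => (hmeas n).sub (hmeas _)) hconv
    refine le_trans hfat (le_trans ?_ (min_le_left ε 1))
    have hbd : ∀ᶠ k in atTop, Wnorm Ω s p (f n - f (φ (ψ k))) ≤ δ := by
      filter_upwards [eventually_ge_atTop N] with k hk
      have := hN n hn (φ (ψ k)) (le_trans hk (hidx k))
      rw [ENNReal.ofReal_toReal hδtop] at this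
      exact this.le
    refine le_trans (liminf_le_liminf hbd) ?_
    simp [hδ_def]
end

section
/- If a measurable function f : ℝ^d → ℝ satisfies ∫_Ω ∫_{Ω^c} |f(x)−f(y)|^p |x−y|^{−d−sp} dy dx < ∞, then f ∈ L^p(ℝ^d, (1+|x|)^{−d−sp} dx). -/
open MeasureTheory Metric
open scoped ENNReal
set_option maxHeartbeats 1000000

private lemma ptwise {p q R : ℝ} (hp : 1 ≤ p) (hq : 0 < q) (hR : 1 ≤ R)
    {d : ℕ} (f : EuclideanSpace ℝ (Fin d) → ℝ)
    {x y : EuclideanSpace ℝ (Fin d)} (hy : ‖y‖ < R) (hfy : |f y| ≤ R) :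
    |f x| ^ p * (1 + ‖x‖) ^ (-q) ≤
      (2 ^ p * R ^ q) * (|f x - f y| ^ p / dist x y ^ q)
        + (2 ^ p * R ^ p) * ((1 + ‖x‖) ^ (-q)) := by
  have hp0 : 0 < p := lt_of_lt_of_le one_pos hp
  set a : ℝ := |f x - f y| with ha
  have ha0 : 0 ≤ a := abs_nonneg _
  have hu1 : (1 : ℝ) ≤ 1 + ‖x‖ := by have := norm_nonneg x; linarith
  have hu0 : (0 : ℝ) < 1 + ‖x‖ := lt_of_lt_of_le one_pos hu1
  have hw0 : (0 : ℝ) < (1 + ‖x‖) ^ (-q) := Real.rpow_pos_of_pos hu0 _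
  have hR0 : (0 : ℝ) < R := lt_of_lt_of_le one_pos hR
  have hfx : |f x| ≤ a + R := by
    calc |f x| = |(f x - f y) + f y| := by ring_nf
    _ ≤ |f x - f y| + |f y| := abs_add_le _ _
    _ ≤ a + R := by rw [ha]; linarith
  have hmaxp : (max a R) ^ p ≤ a ^ p + R ^ p := by
    rcases max_cases a R with ⟨h1, h2⟩ | ⟨h1, h2⟩ <;> rw [h1]
    · nlinarith [Real.rpow_nonneg hR0.le p]
    · nlinarith [Real.rpow_nonneg ha0 p]
  have hfpow : |f x| ^ p ≤ 2 ^ p * (a ^ p + R ^ p) := by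
    have h1 : |f x| ≤ 2 * max a R := by
      have := le_max_left a R; have := le_max_right a R; linarith
    calc |f x| ^ p ≤ (2 * max a R) ^ p :=
          Real.rpow_le_rpow (abs_nonneg _) h1 hp0.le
    _ = 2 ^ p * (max a R) ^ p := Real.mul_rpow (by norm_num) (le_max_of_le_right hR0.le)
    _ ≤ 2 ^ p * (a ^ p + R ^ p) := by
        have h2 : (0:ℝ) ≤ 2 ^ p := Real.rpow_nonneg (by norm_num) p
        nlinarith
  have h2p : (0:ℝ) ≤ 2 ^ p := Real.rpow_nonneg (by norm_num) p
  rcases eq_or_lt_of_le (dist_nonneg (x := x) (y := y)) with hd0 | hd0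
  · -- dist x y = 0, hence x = y
    have hxy : x = y := by rw [← dist_le_zero]; exact hd0.ge
    have hax : a = 0 := by rw [ha, hxy, sub_self, abs_zero]
    have hap : a ^ p = 0 := by rw [hax, Real.zero_rpow hp0.ne']
    have : |f x| ^ p ≤ 2 ^ p * R ^ p := by rw [hap] at hfpow; linarith
    have hfirst : (0:ℝ) ≤ (2 ^ p * R ^ q) * (a ^ p / dist x y ^ q) := by positivity
    nlinarith [mul_le_mul_of_nonneg_right this hw0.le]
  · -- dist x y > 0
    have hdq0 : (0:ℝ) < dist x y ^ q := Real.rpow_pos_of_pos hd0 _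
    have huq0 : (0:ℝ) < (1 + ‖x‖) ^ q := Real.rpow_pos_of_pos hu0 _
    have hdist : dist x y ≤ R * (1 + ‖x‖) := by
      have h1 : dist x y ≤ ‖x‖ + ‖y‖ := by
        rw [dist_eq_norm]; exact norm_sub_le _ _
      have := norm_nonneg x
      nlinarith
    have hdq : dist x y ^ q ≤ R ^ q * (1 + ‖x‖) ^ q := by
      calc dist x y ^ q ≤ (R * (1 + ‖x‖)) ^ q :=
            Real.rpow_le_rpow dist_nonneg hdist hq.le
      _ = R ^ q * (1 + ‖x‖) ^ q := Real.mul_rpow hR0.le hu0.le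
    have hw : (1 + ‖x‖) ^ (-q) ≤ R ^ q / dist x y ^ q := by
      rw [Real.rpow_neg hu0.le, inv_eq_one_div, div_le_div_iff₀ huq0 hdq0]
      linarith
    have hap0 : (0:ℝ) ≤ a ^ p := Real.rpow_nonneg ha0 p
    calc |f x| ^ p * (1 + ‖x‖) ^ (-q)
        ≤ (2 ^ p * (a ^ p + R ^ p)) * (1 + ‖x‖) ^ (-q) :=
          mul_le_mul_of_nonneg_right hfpow hw0.le
      _ = 2 ^ p * a ^ p * (1 + ‖x‖) ^ (-q) + 2 ^ p * R ^ p * (1 + ‖x‖) ^ (-q) := by ring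
      _ ≤ 2 ^ p * a ^ p * (R ^ q / dist x y ^ q) + 2 ^ p * R ^ p * (1 + ‖x‖) ^ (-q) := by
          gcongr
      _ = (2 ^ p * R ^ q) * (a ^ p / dist x y ^ q)
            + (2 ^ p * R ^ p) * ((1 + ‖x‖) ^ (-q)) := by ring

private lemma aux_est {d : ℕ} (f : EuclideanSpace ℝ (Fin d) → ℝ) (hf : Measurable f)
    {p q R : ℝ} (hp : 1 ≤ p) (hq : (d : ℝ) < q) (hR : 1 ≤ R)
    (S T : Set (EuclideanSpace ℝ (Fin d))) (hTm : MeasurableSet T)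
    (hTb : ∀ y ∈ T, ‖y‖ < R) (hTf : ∀ y ∈ T, |f y| ≤ R)
    (hT0 : 0 < volume T) (hTfin : volume T < ⊤)
    (hd : (∫⁻ x in S, ∫⁻ y in T,
        ENNReal.ofReal (|f x - f y| ^ p / dist x y ^ q)) < ⊤) :
    (∫⁻ x in S, ENNReal.ofReal (|f x| ^ p * (1 + ‖x‖) ^ (-q))) < ⊤ := by
  have hq0 : 0 < q := lt_of_le_of_lt (Nat.cast_nonneg d) hq
  set K1 : ℝ≥0∞ := ENNReal.ofReal (2 ^ p * R ^ q) with hK1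
  set K2 : ℝ≥0∞ := ENNReal.ofReal (2 ^ p * R ^ p) with hK2
  set F : EuclideanSpace ℝ (Fin d) → EuclideanSpace ℝ (Fin d) → ℝ≥0∞ :=
    fun x y => ENNReal.ofReal (|f x - f y| ^ p / dist x y ^ q) with hF
  set G : EuclideanSpace ℝ (Fin d) → ℝ≥0∞ :=
    fun x => ENNReal.ofReal (|f x| ^ p * (1 + ‖x‖) ^ (-q)) with hG
  set W : EuclideanSpace ℝ (Fin d) → ℝ≥0∞ :=
    fun x => ENNReal.ofReal ((1 + ‖x‖) ^ (-q)) with hW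
  have hFm : Measurable (Function.uncurry F) := by
    apply Measurable.ennreal_ofReal
    apply Measurable.div
    · exact (((hf.comp measurable_fst).sub (hf.comp measurable_snd)).abs).pow measurable_const
    · exact (measurable_fst.dist measurable_snd).pow measurable_const
  have hFmx : ∀ x, Measurable (F x) := fun x => hFm.comp (measurable_prodMk_left)
  have hWm : Measurable W := by
    apply Measurable.ennreal_ofReal
    exact ((measurable_const.add measurable_norm).pow measurable_const)
  have hGm : Measurable G := by
    apply Measurable.ennreal_ofReal
    exact (hf.abs.pow measurable_const).mul ((measurable_const.add measurable_norm).pow measurable_const)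
  -- pointwise bound in ℝ≥0∞
  have key : ∀ x, ∀ y ∈ T, G x ≤ K1 * F x y + K2 * W x := by
    intro x y hy
    rw [hG, hK1, hK2, hF, hW, ← ENNReal.ofReal_mul (by positivity),
      ← ENNReal.ofReal_mul (by positivity),
      ← ENNReal.ofReal_add (by positivity) (by positivity)]
    exact ENNReal.ofReal_le_ofReal (ptwise hp hq0 hR f (hTb y hy) (hTf y hy))
  -- average over T
  have hmono : ∀ x, volume T * G x ≤
      (∫⁻ y in T, K1 * F x y) + volume T * (K2 * W x) := by
    intro x
    have h1 : volume T * G x = ∫⁻ _ in T, G x := by rw [setLIntegral_const, mul_comm]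
    rw [h1]
    calc (∫⁻ _ in T, G x) ≤ ∫⁻ y in T, (K1 * F x y + K2 * W x) :=
          setLIntegral_mono' hTm (fun y hy => key x y hy)
    _ = (∫⁻ y in T, K1 * F x y) + ∫⁻ _ in T, K2 * W x :=
          lintegral_add_right _ measurable_const
    _ = (∫⁻ y in T, K1 * F x y) + volume T * (K2 * W x) := by
          rw [setLIntegral_const, mul_comm]
  have hIm : Measurable fun x => ∫⁻ y in T, F x y := hFm.lintegral_prod_right
  have hmain : volume T * (∫⁻ x in S, G x) ≤
      K1 * (∫⁻ x in S, ∫⁻ y in T, F x y) + volume T * K2 * (∫⁻ x in S, W x) := by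
    calc volume T * (∫⁻ x in S, G x) = ∫⁻ x in S, volume T * G x :=
          (lintegral_const_mul _ hGm).symm
    _ ≤ ∫⁻ x in S, ((∫⁻ y in T, K1 * F x y) + volume T * (K2 * W x)) :=
          lintegral_mono hmono
    _ = (∫⁻ x in S, ∫⁻ y in T, K1 * F x y) + ∫⁻ x in S, volume T * (K2 * W x) :=
          lintegral_add_right _ (((hWm.const_mul K2).const_mul (volume T)))
    _ = K1 * (∫⁻ x in S, ∫⁻ y in T, F x y) + volume T * K2 * (∫⁻ x in S, W x) := by
          congr 1
          · rw [← lintegral_const_mul _ hIm]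
            exact lintegral_congr fun x => lintegral_const_mul _ (hFmx x)
          · rw [lintegral_const_mul _ (hWm.const_mul K2), lintegral_const_mul _ hWm, mul_assoc]
  have htail : (∫⁻ x in S, W x) < ⊤ := by
    refine lt_of_le_of_lt (setLIntegral_le_lintegral _ _) ?_
    have hfin : ((Module.finrank ℝ (EuclideanSpace ℝ (Fin d)) : ℝ)) < q := by
      rwa [finrank_euclideanSpace_fin]
    exact finite_integral_one_add_norm hfin
  have hRHS : K1 * (∫⁻ x in S, ∫⁻ y in T, F x y) + volume T * K2 * (∫⁻ x in S, W x) < ⊤ := by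
    apply ENNReal.add_lt_top.2
    constructor
    · exact ENNReal.mul_lt_top ENNReal.ofReal_lt_top hd
    · exact ENNReal.mul_lt_top (ENNReal.mul_lt_top hTfin ENNReal.ofReal_lt_top) htail
  by_contra hcon
  push_neg at hcon
  have htop : (∫⁻ x in S, G x) = ⊤ := top_le_iff.mp hcon
  rw [htop, ENNReal.mul_top hT0.ne'] at hmain
  exact (hmain.trans_lt hRHS).ne rfl

theorem stmt5 {d : ℕ} (Ω : Set (EuclideanSpace ℝ (Fin d))) (hΩ : IsOpen Ω)
    (h1 : 0 < volume Ω) (h2 : 0 < volume Ωᶜ)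
    (s p : ℝ) (hs : 0 < s) (hs1 : s < 1) (hp : 1 ≤ p)
    (f : EuclideanSpace ℝ (Fin d) → ℝ) (hf : Measurable f)
    (hsemi : (∫⁻ x in Ω, ∫⁻ y in Ωᶜ,
        ENNReal.ofReal (|f x - f y| ^ p / dist x y ^ ((d : ℝ) + s * p))) < ⊤) :
    (∫⁻ x, ENNReal.ofReal (|f x| ^ p * (1 + ‖x‖) ^ (-((d : ℝ) + s * p)))) < ⊤ := by
  set q : ℝ := (d : ℝ) + s * p with hqdef
  have hq : (d : ℝ) < q := by
    have : 0 < s * p := mul_pos hs (lt_of_lt_of_le one_pos hp)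
    rw [hqdef]; linarith
  -- bounded pieces of positive measure
  set B : Set (EuclideanSpace ℝ (Fin d)) → ℕ → Set (EuclideanSpace ℝ (Fin d)) :=
    fun U n => U ∩ {x | ‖x‖ < n} ∩ {x | |f x| ≤ n} with hBdef
  have hcover : ∀ U : Set (EuclideanSpace ℝ (Fin d)), (⋃ n : ℕ, B U n) = U := by
    intro U
    ext x
    simp only [hBdef, Set.mem_iUnion, Set.mem_inter_iff, Set.mem_setOf_eq]
    constructor
    · rintro ⟨n, ⟨hx, _⟩, _⟩; exact hx
    · intro hx
      obtain ⟨n, hn⟩ := exists_nat_gt (max ‖x‖ |f x|)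
      exact ⟨n, ⟨hx, lt_of_le_of_lt (le_max_left _ _) hn⟩,
        le_of_lt (lt_of_le_of_lt (le_max_right _ _) hn)⟩
  have hpos : ∀ U : Set (EuclideanSpace ℝ (Fin d)), 0 < volume U →
      ∃ n : ℕ, 0 < volume (B U n) := by
    intro U hU
    apply exists_measure_pos_of_not_measure_iUnion_null
    rw [hcover U]
    exact hU.ne'
  obtain ⟨n₁, hn₁⟩ := hpos Ω h1
  obtain ⟨n₂, hn₂⟩ := hpos Ωᶜ h2
  set R : ℝ := (n₁ : ℝ) + (n₂ : ℝ) + 1 with hRdef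
  have hR : 1 ≤ R := by
    have h1' : (0:ℝ) ≤ (n₁:ℝ) := Nat.cast_nonneg _
    have h2' : (0:ℝ) ≤ (n₂:ℝ) := Nat.cast_nonneg _
    rw [hRdef]; linarith
  have hBprop : ∀ (U : Set (EuclideanSpace ℝ (Fin d))) (n : ℕ), (n : ℝ) ≤ R →
      (∀ y ∈ B U n, ‖y‖ < R) ∧ (∀ y ∈ B U n, |f y| ≤ R) ∧ volume (B U n) < ⊤ := by
    intro U n hnR
    have hball : ∀ y ∈ B U n, ‖y‖ < R := by
      rintro y ⟨⟨_, hy⟩, _⟩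
      exact lt_of_lt_of_le hy hnR
    refine ⟨hball, ?_, ?_⟩
    · rintro y ⟨⟨_, _⟩, hy⟩
      exact le_trans hy hnR
    · refine lt_of_le_of_lt (measure_mono (fun y hy => ?_)) (measure_ball_lt_top (x := 0) (r := R))
      exact mem_ball_zero_iff.2 (hball y hy)
  have hn₁R : (n₁ : ℝ) ≤ R := by rw [hRdef]; have : (0:ℝ) ≤ (n₂ : ℝ) := Nat.cast_nonneg _; linarith
  have hn₂R : (n₂ : ℝ) ≤ R := by rw [hRdef]; have : (0:ℝ) ≤ (n₁ : ℝ) := Nat.cast_nonneg _; linarith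
  obtain ⟨hA_ball, hA_f, hA_fin⟩ := hBprop Ω n₁ hn₁R
  obtain ⟨hC_ball, hC_f, hC_fin⟩ := hBprop Ωᶜ n₂ hn₂R
  have hmeasB : ∀ (U : Set (EuclideanSpace ℝ (Fin d))), MeasurableSet U →
      ∀ n : ℕ, MeasurableSet (B U n) := by
    intro U hU n
    exact (hU.inter (measurableSet_lt measurable_norm measurable_const)).inter
      (measurableSet_le hf.abs measurable_const)
  have hAm : MeasurableSet (B Ω n₁) := hmeasB Ω hΩ.measurableSet n₁
  have hCm : MeasurableSet (B Ωᶜ n₂) := hmeasB Ωᶜ hΩ.measurableSet.compl n₂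
  have hAsub : B Ω n₁ ⊆ Ω := fun y hy => hy.1.1
  have hCsub : B Ωᶜ n₂ ⊆ Ωᶜ := fun y hy => hy.1.1
  set F : EuclideanSpace ℝ (Fin d) → EuclideanSpace ℝ (Fin d) → ℝ≥0∞ :=
    fun x y => ENNReal.ofReal (|f x - f y| ^ p / dist x y ^ q) with hFdef
  have hFm : Measurable (Function.uncurry F) := by
    apply Measurable.ennreal_ofReal
    apply Measurable.div
    · exact (((hf.comp measurable_fst).sub (hf.comp measurable_snd)).abs).pow measurable_const
    · exact (measurable_fst.dist measurable_snd).pow measurable_const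
  -- the Ω part
  have hdΩ : (∫⁻ x in Ω, ∫⁻ y in B Ωᶜ n₂, F x y) < ⊤ := by
    refine lt_of_le_of_lt (lintegral_mono fun x => lintegral_mono_set hCsub) ?_
    exact hsemi
  have hpartΩ := aux_est f hf hp hq hR Ω (B Ωᶜ n₂) hCm hC_ball hC_f hn₂ hC_fin hdΩ
  -- the Ωᶜ part, by symmetry
  have hdΩc : (∫⁻ x in Ωᶜ, ∫⁻ y in B Ω n₁, F x y) < ⊤ := by
    have hswap : (∫⁻ x in Ωᶜ, ∫⁻ y in B Ω n₁, F x y)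
        = ∫⁻ y in B Ω n₁, ∫⁻ x in Ωᶜ, F x y :=
      lintegral_lintegral_swap hFm.aemeasurable
    have hsymm : (∫⁻ y in B Ω n₁, ∫⁻ x in Ωᶜ, F x y)
        = ∫⁻ y in B Ω n₁, ∫⁻ x in Ωᶜ, F y x := by
      refine lintegral_congr fun y => lintegral_congr fun x => ?_
      rw [hFdef]
      simp only
      rw [abs_sub_comm, dist_comm]
    rw [hswap, hsymm]
    refine lt_of_le_of_lt (lintegral_mono_set hAsub) hsemi
  have hpartΩc := aux_est f hf hp hq hR Ωᶜ (B Ω n₁) hAm hA_ball hA_f hn₁ hA_fin hdΩc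
  rw [← lintegral_add_compl _ hΩ.measurableSet]
  exact ENNReal.add_lt_top.2 ⟨hpartΩ, hpartΩc⟩
end

section
/- If D ⊂ ℝ^d is κ-plump (for each 0 < r < diam(D) and x ∈ closure(D) there is z ∈ closed ball B̄(x,r) with B(z,κr) ⊂ D), then its boundary ∂D is porous: there exists α > 0 such that for every x ∈ ℝ^d and 0 < r ≤ 1 there exists y ∈ B(x,r) with B(y, αr) ⊂ B(x,r) ∖ ∂D. -/
theorem stmt10 {d : ℕ} (D : Set (EuclideanSpace ℝ (Fin d))) (κ : ℝ) (hκ : κ ∈ Set.Ioo (0:ℝ) 1)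
    (hplump : ∀ r : ℝ, 0 < r → ENNReal.ofReal r < EMetric.diam D →
      ∀ x ∈ closure D, ∃ z ∈ Metric.closedBall x r, Metric.ball z (κ * r) ⊆ D) :
    ∃ α : ℝ, 0 < α ∧ ∀ (x : EuclideanSpace ℝ (Fin d)) (r : ℝ), 0 < r → r ≤ 1 →
      ∃ y ∈ Metric.ball x r, Metric.ball y (α * r) ⊆ Metric.ball x r \ frontier D := by
  obtain ⟨hκ0, hκ1⟩ := hκ
  refine ⟨κ/16, by positivity, fun x r hr hr1 => ?_⟩
  by_cases hA : ∀ p ∈ Metric.ball x (r/2), p ∉ frontier D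
  · refine ⟨x, Metric.mem_ball_self hr, fun w hw => ?_⟩
    have hw' : w ∈ Metric.ball x (r/2) := by
      rw [Metric.mem_ball] at hw ⊢
      nlinarith
    exact ⟨Metric.ball_subset_ball (by linarith) hw', hA w hw'⟩
  · push_neg at hA
    obtain ⟨p, hpx, hpF⟩ := hA
    rw [Metric.mem_ball] at hpx
    by_cases hdiam : ENNReal.ofReal (r/4) < EMetric.diam D
    · obtain ⟨z, hz, hzD⟩ := hplump (r/4) (by linarith) hdiam p (frontier_subset_closure hpF)
      rw [Metric.mem_closedBall] at hz
      refine ⟨z, ?_, fun w hw => ?_⟩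
      · rw [Metric.mem_ball]
        calc dist z x ≤ dist z p + dist p x := dist_triangle _ _ _
          _ < r := by linarith
      · rw [Metric.mem_ball] at hw
        have hwint : w ∈ interior D := by
          apply interior_maximal hzD Metric.isOpen_ball
          rw [Metric.mem_ball]
          nlinarith
        constructor
        · rw [Metric.mem_ball]
          calc dist w x ≤ dist w z + dist z p + dist p x := dist_triangle4 _ _ _ _
            _ < r := by nlinarith
        · intro hwF
          exact hwF.2 hwint
    · have hbound : ∀ q ∈ closure D, dist p q ≤ r/4 := by
        intro q hq
        have h1 : edist p q ≤ EMetric.diam (closure D) :=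
          EMetric.edist_le_diam_of_mem (frontier_subset_closure hpF) hq
        rw [show EMetric.diam (closure D) = EMetric.diam D from Metric.ediam_closure _] at h1
        have h2 : edist p q ≤ ENNReal.ofReal (r/4) := h1.trans (not_lt.1 hdiam)
        rw [edist_dist] at h2
        exact (ENNReal.ofReal_le_ofReal_iff (by linarith)).1 h2
      rcases Nat.eq_zero_or_pos d with hd | hd
      · exfalso
        haveI : Subsingleton (EuclideanSpace ℝ (Fin d)) :=
          ⟨fun a b => by ext i; exact absurd i.2 (by omega)⟩
        rcases Set.eq_empty_or_nonempty D with h | h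
        · rw [h] at hpF; simp at hpF
        · rw [h.eq_univ] at hpF; simp at hpF
      · set e : EuclideanSpace ℝ (Fin d) := EuclideanSpace.single ⟨0, hd⟩ (1:ℝ) with he
        have hne : ‖e‖ = 1 := by
          simp [he, EuclideanSpace.norm_single]
        set y : EuclideanSpace ℝ (Fin d) := p + (3*r/8) • e with hy
        have hdyp : dist y p = 3*r/8 := by
          rw [hy, dist_self_add_left, norm_smul, hne, mul_one, Real.norm_eq_abs,
            abs_of_nonneg (by linarith : (0:ℝ) ≤ 3*r/8)]
        refine ⟨y, ?_, fun w hw => ?_⟩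
        · rw [Metric.mem_ball]
          calc dist y x ≤ dist y p + dist p x := dist_triangle _ _ _
            _ < r := by linarith
        · rw [Metric.mem_ball] at hw
          constructor
          · rw [Metric.mem_ball]
            calc dist w x ≤ dist w y + dist y p + dist p x := dist_triangle4 _ _ _ _
              _ < r := by nlinarith
          · intro hwF
            have hwc := hbound w (frontier_subset_closure hwF)
            have : dist y p ≤ dist y w + dist w p := dist_triangle _ _ _
            rw [dist_comm p w] at hwc
            rw [dist_comm y w] at this
            nlinarith
end

section
/- Let f : ℝ^d → ℝ be defined by f(x) = √(|x|−1) for 1 < |x| < 2 and f(x) = 0 otherwise, and let Ω = B_1 ⊂ ℝ^d. Then the seminorm |f|_{W^{s,2}(Ω|Ω^c)}^2 = ∫_{B_1} ∫_{ℝ^d∖B_1} |f(x)−f(y)|^2 |x−y|^{−d−2s} dy dx tends to infinity as s → 1⁻. -/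
open MeasureTheory

/-- The function `f(x) = √(|x|-1)` for `1 < |x| < 2` and `0` otherwise. -/
noncomputable def sqrtFn (d : ℕ) (x : EuclideanSpace ℝ (Fin d)) : ℝ :=
  if 1 < ‖x‖ ∧ ‖x‖ < 2 then Real.sqrt (‖x‖ - 1) else 0

namespace Stmt15Aux

open Metric Set

lemma pointwise_bound (d : ℕ) (s : ℝ) (hs1 : 1/2 ≤ s) (hs2 : s ≤ 1)
    (x y : EuclideanSpace ℝ (Fin d)) (hx1 : 3/4 ≤ ‖x‖) (hx2 : ‖x‖ < 1)
    (hy : y ∈ ball (((1 + 2*(1-‖x‖))/‖x‖) • x) ((1-‖x‖)/2)) :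
    1 < ‖y‖ ∧
    (1-‖x‖) * (4*(1-‖x‖)) ^ (-((d:ℝ) + 2*s)) ≤
      |sqrtFn d x - sqrtFn d y| ^ 2 * dist x y ^ (-((d:ℝ) + 2*s)) := by
  have hδ0 : 0 < 1 - ‖x‖ := by linarith
  have hδ4 : 1 - ‖x‖ ≤ 1/4 := by linarith
  set δ := 1 - ‖x‖ with hδdef
  set c := ((1 + 2*δ)/‖x‖) • x with hcdef
  have hxpos : (0:ℝ) < ‖x‖ := by linarith
  have hnc : ‖c‖ = 1 + 2*δ := by
    rw [hcdef, norm_smul, Real.norm_eq_abs, abs_of_pos (by positivity),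
      div_mul_cancel₀ _ hxpos.ne']
  have hyc : dist y c < δ/2 := mem_ball.mp hy
  have hylb : 1 + 3*δ/2 < ‖y‖ := by
    have h1 : dist c 0 ≤ dist c y + dist y 0 := dist_triangle _ _ _
    rw [dist_zero_right, dist_zero_right, dist_comm c y] at h1
    rw [hnc] at h1; linarith
  have hyub : ‖y‖ < 1 + 5*δ/2 := by
    have h1 : dist y 0 ≤ dist y c + dist c 0 := dist_triangle _ _ _
    rw [dist_zero_right, dist_zero_right, hnc] at h1; linarith
  have hy1 : 1 < ‖y‖ := by linarith
  refine ⟨hy1, ?_⟩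
  have hxc : dist x c = 3*δ := by
    have h1 : x - c = ((‖x‖ - (1 + 2*δ))/‖x‖) • x := by
      rw [hcdef, sub_div, div_self hxpos.ne', sub_smul, one_smul]
    rw [dist_eq_norm, h1, norm_smul, Real.norm_eq_abs, abs_div, abs_of_pos hxpos,
      div_mul_cancel₀ _ hxpos.ne', abs_of_neg (by linarith)]
    linarith
  have hdxy : dist x y ≤ 4*δ := by
    have h2 := dist_triangle x c y
    rw [dist_comm c y] at h2; linarith
  have hdpos : 0 < dist x y := by
    rw [dist_pos]; intro h; rw [h] at hx2; linarith
  have hfx : sqrtFn d x = 0 := by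
    rw [sqrtFn, if_neg]; rintro ⟨h1, -⟩; linarith
  have hfy : sqrtFn d y = Real.sqrt (‖y‖ - 1) := by
    rw [sqrtFn, if_pos ⟨hy1, by linarith⟩]
  rw [hfx, hfy, zero_sub, abs_neg, abs_of_nonneg (Real.sqrt_nonneg _),
    Real.sq_sqrt (by linarith)]
  have hd0 : (0:ℝ) ≤ (d:ℝ) := Nat.cast_nonneg d
  apply mul_le_mul (by linarith)
  · exact Real.rpow_le_rpow_of_nonpos hdpos hdxy (by linarith)
  · exact Real.rpow_nonneg (by linarith) _
  · linarith

lemma inner_bound (d : ℕ) (hd : 1 ≤ d) (s : ℝ) (hs1 : 1/2 ≤ s) (hs2 : s ≤ 1)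
    (x : EuclideanSpace ℝ (Fin d)) (hx1 : 3/4 ≤ ‖x‖) (hx2 : ‖x‖ < 1) :
    ENNReal.ofReal ((1-‖x‖) * (4*(1-‖x‖)) ^ (-((d:ℝ) + 2*s))) *
      (ENNReal.ofReal (((1-‖x‖)/2)^d) * volume (ball (0: EuclideanSpace ℝ (Fin d)) 1)) ≤
    ∫⁻ y in (ball (0: EuclideanSpace ℝ (Fin d)) 1)ᶜ,
      ENNReal.ofReal (|sqrtFn d x - sqrtFn d y|^2 * dist x y ^ (-((d:ℝ)+2*s))) := by
  haveI : Nonempty (Fin d) := ⟨⟨0, hd⟩⟩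
  haveI : Nontrivial (EuclideanSpace ℝ (Fin d)) := inferInstance
  have hδ0 : 0 < 1 - ‖x‖ := by linarith
  set δ := 1 - ‖x‖ with hδdef
  set c := ((1 + 2*δ)/‖x‖) • x with hcdef
  have hvol : volume (ball c (δ/2)) = ENNReal.ofReal ((δ/2)^d) * volume (ball (0: EuclideanSpace ℝ (Fin d)) 1) := by
    rw [Measure.addHaar_ball volume c (by positivity), finrank_euclideanSpace_fin]
  have hsub : ball c (δ/2) ⊆ (ball (0: EuclideanSpace ℝ (Fin d)) 1)ᶜ := by
    intro y hy
    have h1 := (pointwise_bound d s hs1 hs2 x y hx1 hx2 hy).1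
    simp only [mem_compl_iff, mem_ball_zero_iff, not_lt]
    linarith
  calc ENNReal.ofReal (δ * (4*δ) ^ (-((d:ℝ) + 2*s))) *
      (ENNReal.ofReal ((δ/2)^d) * volume (ball (0: EuclideanSpace ℝ (Fin d)) 1))
      = ENNReal.ofReal (δ * (4*δ) ^ (-((d:ℝ) + 2*s))) * volume (ball c (δ/2)) := by
        rw [hvol]
    _ = ∫⁻ _ in ball c (δ/2), ENNReal.ofReal (δ * (4*δ) ^ (-((d:ℝ) + 2*s))) :=
        (setLIntegral_const _ _).symm
    _ ≤ ∫⁻ y in ball c (δ/2),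
        ENNReal.ofReal (|sqrtFn d x - sqrtFn d y|^2 * dist x y ^ (-((d:ℝ)+2*s))) := by
        refine setLIntegral_mono' measurableSet_ball fun y hy => ?_
        exact ENNReal.ofReal_le_ofReal (pointwise_bound d s hs1 hs2 x y hx1 hx2 hy).2
    _ ≤ _ := lintegral_mono_set hsub

lemma const_bound (d : ℕ) (s : ℝ) (hs1 : 1/2 ≤ s) (hs2 : s ≤ 1) (δ δ0 : ℝ)
    (h0 : 0 < δ) (hδ : δ ≤ δ0) :
    ((1/2:ℝ)^d * (1/4:ℝ)^(d+2)) * δ0 ^ (1 - 2*s) ≤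
      (δ/2)^d * (δ * (4*δ) ^ (-((d:ℝ)+2*s))) := by
  have h00 : 0 < δ0 := lt_of_lt_of_le h0 hδ
  have h1 : (4*δ) ^ (-((d:ℝ)+2*s)) = (4:ℝ)^(-((d:ℝ)+2*s)) * δ^(-((d:ℝ)+2*s)) :=
    Real.mul_rpow (by norm_num) h0.le
  have h2 : (δ/2)^d = (1/2:ℝ)^d * δ^d := by
    rw [div_pow, one_div, inv_pow]; ring
  have h3 : (δ:ℝ)^d * (δ * δ^(-((d:ℝ)+2*s))) = δ ^ (1 - 2*s) := by
    have hA : δ * δ^(-((d:ℝ)+2*s)) = δ^(1 + -((d:ℝ)+2*s)) := by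
      rw [Real.rpow_add h0, Real.rpow_one]
    rw [hA, ← Real.rpow_natCast δ d, ← Real.rpow_add h0]
    congr 1; ring
  have hrw : (δ/2)^d * (δ * (4*δ) ^ (-((d:ℝ)+2*s))) =
      (1/2:ℝ)^d * ((4:ℝ)^(-((d:ℝ)+2*s)) * δ ^ (1-2*s)) := by
    rw [h1, h2, ← h3]; ring
  rw [hrw]
  have h4 : ((1/4:ℝ))^(d+2) ≤ (4:ℝ)^(-((d:ℝ)+2*s)) := by
    have he : ((1/4:ℝ))^(d+2) = (4:ℝ)^(-(((d+2:ℕ)):ℝ)) := by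
      rw [Real.rpow_neg (by norm_num), Real.rpow_natCast]
      rw [one_div, inv_pow]
    rw [he]
    apply Real.rpow_le_rpow_of_exponent_le (by norm_num)
    push_cast; linarith
  have h5 : δ0 ^ (1 - 2*s) ≤ δ ^ (1 - 2*s) :=
    Real.rpow_le_rpow_of_nonpos h0 hδ (by linarith)
  rw [mul_assoc]
  apply mul_le_mul_of_nonneg_left _ (by positivity)
  apply mul_le_mul h4 h5 (Real.rpow_nonneg h00.le _) (Real.rpow_nonneg (by norm_num) _)

lemma pow_half_bound (m : ℕ) (s : ℝ) (h : (m:ℝ) * (2 - 2*s) ≤ 1) :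
    (1/4 : ℝ) ≤ ((1/2:ℝ)^m) ^ (1 - 2*s) * ((1/2:ℝ)^(m+1)) := by
  have hq0 : (0:ℝ) < (1/2:ℝ)^m := by positivity
  have h1 : ((1/2:ℝ)^m) ^ (1 - 2*s) * ((1/2:ℝ)^(m+1)) =
      ((1/2:ℝ)^m) ^ (2 - 2*s) * (1/2) := by
    rw [pow_succ, show (2-2*s) = (1-2*s) + 1 by ring, Real.rpow_add hq0, Real.rpow_one]
    ring
  rw [h1]
  have h2 : ((1/2:ℝ)^m) ^ (2 - 2*s) = (1/2:ℝ) ^ ((m:ℝ)*(2-2*s)) := by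
    rw [← Real.rpow_natCast (1/2:ℝ) m, ← Real.rpow_mul (by norm_num)]
  rw [h2]
  have h3 : (1/2:ℝ) ^ (1:ℝ) ≤ (1/2:ℝ) ^ ((m:ℝ)*(2-2*s)) :=
    Real.rpow_le_rpow_of_exponent_ge (by norm_num) (by norm_num) h
  rw [Real.rpow_one] at h3
  linarith

lemma shell_vol (d : ℕ) (hd : 1 ≤ d) (n : ℕ) :
    ENNReal.ofReal ((1/2:ℝ)^(n+3) * (1/2:ℝ)^(d-1)) *
        volume (ball (0: EuclideanSpace ℝ (Fin d)) 1) ≤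
      volume (ball (0: EuclideanSpace ℝ (Fin d)) (1 - (1/2:ℝ)^(n+3)) \
        closedBall 0 (1 - (1/2:ℝ)^(n+2))) := by
  haveI : Nonempty (Fin d) := ⟨⟨0, hd⟩⟩
  obtain ⟨k, rfl⟩ : ∃ k, d = k + 1 := ⟨d - 1, by omega⟩
  have hpow : (1/2:ℝ)^(n+3) ≤ (1/2:ℝ)^2 :=
    pow_le_pow_of_le_one (by norm_num) (by norm_num) (by omega)
  have hpow2 : (1/2:ℝ)^(n+2) ≤ (1/2:ℝ)^2 :=
    pow_le_pow_of_le_one (by norm_num) (by norm_num) (by omega)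
  have hp3 : (0:ℝ) < (1/2:ℝ)^(n+3) := by positivity
  set a := 1 - (1/2:ℝ)^(n+2) with ha
  set b := 1 - (1/2:ℝ)^(n+3) with hb
  have ha0 : (0:ℝ) ≤ a := by rw [ha]; norm_num at hpow2 ⊢; linarith
  have hab : a < b := by
    rw [ha, hb]
    have : (1/2:ℝ)^(n+3) < (1/2:ℝ)^(n+2) :=
      pow_lt_pow_right_of_lt_one₀ (by norm_num) (by norm_num) (by omega)
    linarith
  have hb0 : (0:ℝ) ≤ b := by linarith
  have hdiff : volume (ball (0: EuclideanSpace ℝ (Fin (k+1))) b \ closedBall 0 a) =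
      volume (ball (0: EuclideanSpace ℝ (Fin (k+1))) b) - volume (closedBall (0: EuclideanSpace ℝ (Fin (k+1))) a) :=
    measure_diff (closedBall_subset_ball hab) measurableSet_closedBall.nullMeasurableSet
      measure_closedBall_lt_top.ne
  rw [hdiff, Measure.addHaar_ball volume _ hb0, Measure.addHaar_closedBall volume _ ha0,
    finrank_euclideanSpace_fin]
  apply ENNReal.le_sub_of_add_le_left
    (ENNReal.mul_ne_top ENNReal.ofReal_ne_top measure_ball_lt_top.ne)
  rw [← add_mul, ← ENNReal.ofReal_add (by positivity) (by positivity)]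
  apply mul_le_mul_left
  apply ENNReal.ofReal_le_ofReal
  have hsub : b - a = (1/2:ℝ)^(n+3) := by
    rw [ha, hb, show n+3 = (n+2)+1 from rfl, pow_succ]; ring
  have hahalf : (1/2:ℝ) ≤ a := by norm_num at hpow2 ⊢; linarith
  have h1 : (1/2:ℝ)^(k+1-1) ≤ a^k := by
    simp only [Nat.add_sub_cancel]
    exact pow_le_pow_left₀ (by norm_num) hahalf k
  have h2 : a^k ≤ b^k := pow_le_pow_left₀ ha0 hab.le k
  have hbk : b^(k+1) = b * b^k := by ring
  have hak : a^(k+1) = a * a^k := by ring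
  calc a ^ (k+1) + (1/2:ℝ)^(n+3) * (1/2:ℝ)^(k+1-1)
      ≤ a ^ (k+1) + (b - a) * a^k := by
        rw [hsub]
        have : (1/2:ℝ)^(n+3) * (1/2:ℝ)^(k+1-1) ≤ (1/2:ℝ)^(n+3) * a^k :=
          mul_le_mul_of_nonneg_left h1 hp3.le
        linarith
    _ ≤ b ^ (k+1) := by rw [hbk, hak]; nlinarith [pow_nonneg ha0 k]

end Stmt15Aux

open Stmt15Aux Metric Set Filter in
theorem stmt15 (d : ℕ) (hd : 1 ≤ d) :
    Filter.Tendsto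
      (fun s : ℝ => ∫⁻ x in Metric.ball (0 : EuclideanSpace ℝ (Fin d)) 1,
        ∫⁻ y in (Metric.ball (0 : EuclideanSpace ℝ (Fin d)) 1)ᶜ,
          ENNReal.ofReal (|sqrtFn d x - sqrtFn d y| ^ 2 * dist x y ^ (-((d : ℝ) + 2 * s))))
      (nhdsWithin 1 (Set.Iio 1)) (nhds ⊤) := by
  haveI : Nonempty (Fin d) := ⟨⟨0, hd⟩⟩
  rw [ENNReal.tendsto_nhds_top_iff_nat]
  intro K
  set κ := volume (ball (0 : EuclideanSpace ℝ (Fin d)) 1) with hκ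
  have hκ0 : κ ≠ 0 := (measure_ball_pos volume 0 one_pos).ne'
  have hκt : κ ≠ ⊤ := measure_ball_lt_top.ne
  set c2 : ℝ := ((1/2:ℝ)^d * (1/4:ℝ)^(d+2)) * ((1/2:ℝ)^(d-1) * (1/4)) with hc2
  have hc2pos : 0 < c2 := by positivity
  set ε : ENNReal := ENNReal.ofReal c2 * (κ * κ) with hε
  have hε0 : ε ≠ 0 := mul_ne_zero (ENNReal.ofReal_pos.mpr hc2pos).ne' (mul_ne_zero hκ0 hκ0)
  have hεt : ε ≠ ⊤ := ENNReal.mul_ne_top ENNReal.ofReal_ne_top (ENNReal.mul_ne_top hκt hκt)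
  obtain ⟨N, hN⟩ := ENNReal.exists_nat_gt (ENNReal.div_lt_top (ENNReal.natCast_ne_top K) hε0).ne
  have hKN : (K : ENNReal) < N * ε := by
    rwa [ENNReal.div_lt_iff (Or.inl hε0) (Or.inl hεt)] at hN
  have ha1 : max (1/2 : ℝ) (1 - 1/(2*((N:ℝ)+2))) < 1 := by
    apply max_lt (by norm_num)
    have : (0:ℝ) < 1/(2*((N:ℝ)+2)) := by positivity
    linarith
  filter_upwards [Ioo_mem_nhdsLT_of_mem (⟨ha1, le_refl (1:ℝ)⟩ : (1:ℝ) ∈ Set.Ioc _ 1)]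
    with s hs
  obtain ⟨hsl, hsu⟩ := hs
  have hs1 : 1/2 ≤ s := le_of_lt (lt_of_le_of_lt (le_max_left _ _) hsl)
  have hs2 : s ≤ 1 := hsu.le
  have hsN : 1 - 1/(2*((N:ℝ)+2)) ≤ s := le_of_lt (lt_of_le_of_lt (le_max_right _ _) hsl)
  set T : ℕ → Set (EuclideanSpace ℝ (Fin d)) := fun n =>
    ball 0 (1 - (1/2:ℝ)^(n+3)) \ closedBall 0 (1 - (1/2:ℝ)^(n+2)) with hT
  have hTmeas : ∀ n, MeasurableSet (T n) := fun n =>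
    measurableSet_ball.diff measurableSet_closedBall
  have hmem : ∀ (n : ℕ) (x : EuclideanSpace ℝ (Fin d)), x ∈ T n ↔
      1 - (1/2:ℝ)^(n+2) < ‖x‖ ∧ ‖x‖ < 1 - (1/2:ℝ)^(n+3) := by
    intro n x
    simp only [hT, mem_diff, mem_ball_zero_iff, mem_closedBall_zero_iff, not_le]
    tauto
  have hdisj : Pairwise (Function.onFun Disjoint T) := by
    have key : ∀ m n, m < n → Disjoint (T m) (T n) := by
      intro m n hmn
      rw [Set.disjoint_left]
      intro x hxm hxn
      rw [hmem] at hxm hxn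
      have : (1/2:ℝ)^(n+2) ≤ (1/2:ℝ)^(m+3) :=
        pow_le_pow_of_le_one (by norm_num) (by norm_num) (by omega)
      linarith [hxm.2, hxn.1]
    intro m n hmn
    rcases hmn.lt_or_gt with h | h
    · exact key m n h
    · exact (key n m h).symm
  have hUsub : (⋃ n, T n) ⊆ ball (0 : EuclideanSpace ℝ (Fin d)) 1 := by
    intro x hx
    simp only [mem_iUnion] at hx
    obtain ⟨n, hn⟩ := hx
    rw [hmem] at hn
    rw [mem_ball_zero_iff]
    have : (0:ℝ) < (1/2:ℝ)^(n+3) := by positivity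
    linarith [hn.2]
  refine lt_of_lt_of_le hKN ?_
  have hterm : ∀ n < N, ε ≤ ∫⁻ x in T n,
      ∫⁻ y in (ball (0 : EuclideanSpace ℝ (Fin d)) 1)ᶜ,
        ENNReal.ofReal (|sqrtFn d x - sqrtFn d y| ^ 2 * dist x y ^ (-((d : ℝ) + 2 * s))) := by
    intro n hn
    have hp2 : (1/2:ℝ)^(n+2) ≤ 1/4 := by
      calc (1/2:ℝ)^(n+2) ≤ (1/2:ℝ)^2 :=
            pow_le_pow_of_le_one (by norm_num) (by norm_num) (by omega)
        _ = 1/4 := by norm_num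
    have hp2pos : (0:ℝ) < (1/2:ℝ)^(n+2) := by positivity
    have hp3pos : (0:ℝ) < (1/2:ℝ)^(n+3) := by positivity
    -- pointwise inner bound
    have hpt : ∀ x ∈ T n,
        ENNReal.ofReal (((1/2:ℝ)^d * (1/4:ℝ)^(d+2)) * ((1/2:ℝ)^(n+2)) ^ (1-2*s)) * κ ≤
        ∫⁻ y in (ball (0 : EuclideanSpace ℝ (Fin d)) 1)ᶜ,
          ENNReal.ofReal (|sqrtFn d x - sqrtFn d y| ^ 2 * dist x y ^ (-((d : ℝ) + 2 * s))) := by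
      intro x hx
      rw [hmem] at hx
      have hx2 : ‖x‖ < 1 := by linarith [hx.2]
      have hx1 : 3/4 ≤ ‖x‖ := by linarith [hx.1]
      have hδpos : 0 < 1 - ‖x‖ := by linarith
      have hδle : 1 - ‖x‖ ≤ (1/2:ℝ)^(n+2) := by linarith [hx.1]
      refine le_trans ?_ (inner_bound d hd s hs1 hs2 x hx1 hx2)
      rw [← mul_assoc, ← ENNReal.ofReal_mul (by positivity)]
      apply mul_le_mul_left
      apply ENNReal.ofReal_le_ofReal
      calc ((1/2:ℝ)^d * (1/4:ℝ)^(d+2)) * ((1/2:ℝ)^(n+2)) ^ (1-2*s)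
          ≤ ((1-‖x‖)/2)^d * ((1-‖x‖) * (4*(1-‖x‖)) ^ (-((d:ℝ)+2*s))) :=
            const_bound d s hs1 hs2 _ _ hδpos hδle
        _ = (1-‖x‖) * (4*(1-‖x‖)) ^ (-((d:ℝ)+2*s)) * ((1-‖x‖)/2)^d := by ring
    -- real constant inequality
    have h2s : 2 - 2*s ≤ 1/((N:ℝ)+2) := by
      have e1 : (2:ℝ) * (1/(2*((N:ℝ)+2))) = 1/((N:ℝ)+2) := by
        field_simp
      linarith [hsN]
    have hmn : ((n:ℝ)+2) * (2-2*s) ≤ 1 := by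
      have h1 : ((n:ℝ)+2) ≤ (N:ℝ)+2 := by
        have := (Nat.cast_le (α := ℝ)).mpr hn.le
        linarith
      have h20 : (0:ℝ) ≤ 2-2*s := by linarith
      calc ((n:ℝ)+2)*(2-2*s) ≤ ((N:ℝ)+2)*(1/((N:ℝ)+2)) :=
            mul_le_mul h1 h2s h20 (by positivity)
        _ = 1 := by field_simp
    have hph : (1/4:ℝ) ≤ ((1/2:ℝ)^(n+2)) ^ (1-2*s) * ((1/2:ℝ)^(n+3)) := by
      have := pow_half_bound (n+2) s (by push_cast; linarith [hmn])
      simpa [show n+2+1 = n+3 by omega] using this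
    have hreal : c2 ≤ (((1/2:ℝ)^d * (1/4:ℝ)^(d+2)) * ((1/2:ℝ)^(n+2)) ^ (1-2*s)) *
        ((1/2:ℝ)^(n+3) * (1/2:ℝ)^(d-1)) := by
      calc c2 = ((1/2:ℝ)^d * (1/4:ℝ)^(d+2) * (1/2:ℝ)^(d-1)) * (1/4) := by rw [hc2]; ring
        _ ≤ ((1/2:ℝ)^d * (1/4:ℝ)^(d+2) * (1/2:ℝ)^(d-1)) *
            (((1/2:ℝ)^(n+2)) ^ (1-2*s) * ((1/2:ℝ)^(n+3))) :=
            mul_le_mul_of_nonneg_left hph (by positivity)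
        _ = _ := by ring
    calc ε ≤ ENNReal.ofReal (((1/2:ℝ)^d * (1/4:ℝ)^(d+2)) * ((1/2:ℝ)^(n+2)) ^ (1-2*s)) * κ *
          (ENNReal.ofReal ((1/2:ℝ)^(n+3) * (1/2:ℝ)^(d-1)) * κ) := by
          rw [show ∀ A B : ENNReal, A * κ * (B * κ) = A * B * (κ * κ) from fun A B => by ring,
            ← ENNReal.ofReal_mul (by positivity)]
          rw [hε]
          exact mul_le_mul_left (ENNReal.ofReal_le_ofReal hreal) _
      _ ≤ ENNReal.ofReal (((1/2:ℝ)^d * (1/4:ℝ)^(d+2)) * ((1/2:ℝ)^(n+2)) ^ (1-2*s)) * κ *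
          volume (T n) := by
          exact mul_le_mul_right (shell_vol d hd n) _
      _ = ∫⁻ _ in T n,
          (ENNReal.ofReal (((1/2:ℝ)^d * (1/4:ℝ)^(d+2)) * ((1/2:ℝ)^(n+2)) ^ (1-2*s)) * κ) :=
          (setLIntegral_const _ _).symm
      _ ≤ _ := setLIntegral_mono' (hTmeas n) hpt
  calc (N:ENNReal) * ε = ∑ _ ∈ Finset.range N, ε := by
        rw [Finset.sum_const, Finset.card_range, nsmul_eq_mul]
    _ ≤ ∑ n ∈ Finset.range N, ∫⁻ x in T n,
        ∫⁻ y in (ball (0 : EuclideanSpace ℝ (Fin d)) 1)ᶜ,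
          ENNReal.ofReal (|sqrtFn d x - sqrtFn d y| ^ 2 * dist x y ^ (-((d : ℝ) + 2 * s))) :=
        Finset.sum_le_sum fun n hn => hterm n (Finset.mem_range.mp hn)
    _ ≤ ∑' n, ∫⁻ x in T n,
        ∫⁻ y in (ball (0 : EuclideanSpace ℝ (Fin d)) 1)ᶜ,
          ENNReal.ofReal (|sqrtFn d x - sqrtFn d y| ^ 2 * dist x y ^ (-((d : ℝ) + 2 * s))) :=
        ENNReal.sum_le_tsum _
    _ = ∫⁻ x in ⋃ n, T n,
        ∫⁻ y in (ball (0 : EuclideanSpace ℝ (Fin d)) 1)ᶜ,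
          ENNReal.ofReal (|sqrtFn d x - sqrtFn d y| ^ 2 * dist x y ^ (-((d : ℝ) + 2 * s))) := by
        rw [Measure.restrict_iUnion hdisj hTmeas, lintegral_sum_measure]
    _ ≤ _ := lintegral_mono_set hUsub
end
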